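/- arXiv:math-ph/0504063 — 5 statements merged into one kernel-verified Lean document; each statement's English description precedes it below -/
import Mathlib

section
/- If M ∈ SL(3,ℤ) has characteristic polynomial (x-1)³, then M is conjugate in SL(3,ℤ) to an upper triangular matrix with all diagonal entries 1. -/
open Polynomial

open Matrix in

lemma sl3aux_primitive3 (v : Fin 3 → ℤ) (hv : v ≠ 0) :
    ∃ (g : ℤ) (u : Fin 3 → ℤ), g ≠ 0 ∧ (∀ i, v i = g * u i) ∧
      Int.gcd (Int.gcd (u 0) (u 1) : ℤ) (u 2) = 1 := by
  set g : ℕ := Int.gcd (Int.gcd (v 0) (v 1) : ℤ) (v 2) with hg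
  have hgdvd : ∀ i, (g : ℤ) ∣ v i := by
    intro i
    fin_cases i
    · exact dvd_trans (Int.gcd_dvd_left _ _) (Int.gcd_dvd_left _ _)
    · exact dvd_trans (Int.gcd_dvd_left _ _) (Int.gcd_dvd_right _ _)
    · exact Int.gcd_dvd_right _ _
  have hgne' : g ≠ 0 := by
    intro h0
    apply hv
    rw [hg] at h0
    rw [Int.gcd_eq_zero_iff] at h0
    obtain ⟨h1, h2⟩ := h0
    have h1' : Int.gcd (v 0) (v 1) = 0 := by exact_mod_cast h1
    rw [Int.gcd_eq_zero_iff] at h1'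
    funext i; fin_cases i <;> simp [h1'.1, h1'.2, h2]
  have hgne : (g : ℤ) ≠ 0 := by exact_mod_cast hgne'
  refine ⟨g, fun i => v i / g, hgne, ?_, ?_⟩
  · intro i; exact (Int.mul_ediv_cancel' (hgdvd i)).symm
  · have h0 : v 0 = (g : ℤ) * (v 0 / g) := (Int.mul_ediv_cancel' (hgdvd 0)).symm
    have h1 : v 1 = (g : ℤ) * (v 1 / g) := (Int.mul_ediv_cancel' (hgdvd 1)).symm
    have h2 : v 2 = (g : ℤ) * (v 2 / g) := (Int.mul_ediv_cancel' (hgdvd 2)).symm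
    have e1 : Int.gcd (v 0) (v 1) = g * Int.gcd (v 0 / g) (v 1 / g) := by
      conv_lhs => rw [h0, h1]
      rw [Int.gcd_mul_left, Int.natAbs_natCast]
    have e2 : g = g * Int.gcd ((Int.gcd (v 0 / g) (v 1 / g) : ℕ) : ℤ) (v 2 / g) := by
      conv_lhs => rw [hg, e1, h2]
      push_cast
      rw [Int.gcd_mul_left, Int.natAbs_natCast]
    have := mul_left_cancel₀ hgne' ((mul_one g).trans e2)
    simpa using this.symm

open Matrix in

lemma sl3aux_extend_col (a b c : ℤ) (h : Int.gcd (Int.gcd a b : ℤ) c = 1) :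
    ∃ P : Matrix (Fin 3) (Fin 3) ℤ, P.det = 1 ∧ P 0 0 = a ∧ P 1 0 = b ∧ P 2 0 = c := by
  by_cases hab : a = 0 ∧ b = 0
  · obtain ⟨ha, hb⟩ := hab
    subst ha hb
    have hc : c = 1 ∨ c = -1 := by
      have : c.natAbs = 1 := by simpa using h
      omega
    refine ⟨!![0, 0, -1; 0, c, 0; c, 0, 0], ?_, by simp, by simp, by simp⟩
    rcases hc with hc | hc <;> subst hc <;> simp [Matrix.det_fin_three]
  · have hg2 : (Int.gcd a b : ℤ) ≠ 0 := by
      intro h0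
      have : Int.gcd a b = 0 := by exact_mod_cast h0
      rw [Int.gcd_eq_zero_iff] at this
      exact hab this
    set g2 : ℤ := (Int.gcd a b : ℤ) with hg2def
    have hbez1 : g2 = a * Int.gcdA a b + b * Int.gcdB a b := Int.gcd_eq_gcd_ab a b
    set p := Int.gcdA a b
    set q := Int.gcdB a b
    have hda : g2 ∣ a := Int.gcd_dvd_left _ _
    have hdb : g2 ∣ b := Int.gcd_dvd_right _ _
    have ha : a = g2 * (a / g2) := (Int.mul_ediv_cancel' hda).symm
    have hb : b = g2 * (b / g2) := (Int.mul_ediv_cancel' hdb).symm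
    set a' := a / g2
    set b' := b / g2
    have hbez1' : a' * p + b' * q = 1 := by
      have : g2 * (a' * p + b' * q) = g2 * 1 := by
        have expand : g2 * (a' * p + b' * q) = (g2 * a') * p + (g2 * b') * q := by ring
        rw [expand, ← ha, ← hb, mul_one, ← hbez1]
      exact mul_left_cancel₀ hg2 this
    have hcop : IsCoprime g2 c := Int.isCoprime_iff_gcd_eq_one.mpr h
    obtain ⟨x, y, hxy⟩ := hcop
    refine ⟨!![a, -q, -(y*a'); b, p, -(y*b'); c, 0, x], ?_, by simp, by simp, by simp⟩
    simp [Matrix.det_fin_three]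
    linear_combination c * y * hbez1' + hxy - x * hbez1

open Matrix in

set_option maxHeartbeats 1000000 in
lemma sl3aux_stage2 (A : Matrix (Fin 3) (Fin 3) ℤ) (hcol : ∀ i, A i 0 = 0)
    (h3 : A * A * A = 0) (htr : A.trace = 0) :
    ∃ S : Matrix (Fin 3) (Fin 3) ℤ, S.det = 1 ∧
      (∀ i j : Fin 3, j < i → (S⁻¹ * A * S) i j = 0) ∧ (∀ i, (S⁻¹ * A * S) i i = 0) := by
  obtain ⟨u, v, p, q, r, s, hu, hv, hp, hq, hr, hs⟩ :
      ∃ u v p q r s : ℤ, A 0 1 = u ∧ A 0 2 = v ∧ A 1 1 = p ∧ A 1 2 = q ∧ A 2 1 = r ∧ A 2 2 = s :=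
    ⟨_, _, _, _, _, _, rfl, rfl, rfl, rfl, rfl, rfl⟩
  have hA : A = !![0, u, v; 0, p, q; 0, r, s] := by
    ext i j
    fin_cases i <;> fin_cases j <;>
      simp [hcol 0, hcol 1, hcol 2, hu, hv, hp, hq, hr, hs, Matrix.vecHead, Matrix.vecTail]
  rw [hA] at h3 htr
  have hsp : s = -p := by
    rw [Matrix.trace_fin_three] at htr
    simp at htr
    linarith
  have e11 := congrFun (congrFun h3 1) 1
  have e21 := congrFun (congrFun h3 2) 1
  simp [Matrix.mul_apply, Fin.sum_univ_three] at e11 e21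
  have hpD : p * (p * p + q * r) = 0 := by linear_combination e11 - q * r * hsp
  have hrD : r * (p * p + q * r) = 0 := by linear_combination e21 - s * r * hsp
  by_cases hpr : p = 0 ∧ r = 0
  · -- already upper triangular
    obtain ⟨hp0, hr0⟩ := hpr
    have hS1 : (1 : Matrix (Fin 3) (Fin 3) ℤ)⁻¹ = 1 := Matrix.inv_eq_right_inv (by simp)
    refine ⟨1, by simp, ?_, ?_⟩
    · intro i j hij
      rw [hS1, one_mul, mul_one, hA]
      fin_cases i <;> fin_cases j <;> simp_all <;> omega
    · intro i
      rw [hS1, one_mul, mul_one, hA]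
      have : s = 0 := by rw [hsp, hp0]; ring
      fin_cases i <;> simp_all
  · -- nontrivial case
    have hD : p * p + q * r = 0 := by
      rcases (not_and_or.mp hpr) with hp0 | hr0
      · exact (mul_eq_zero.mp hpD).resolve_left hp0
      · exact (mul_eq_zero.mp hrD).resolve_left hr0
    have hgne' : Int.gcd p r ≠ 0 := by
      simp only [Ne, Int.gcd_eq_zero_iff]
      tauto
    have hgpos : 0 < Int.gcd p r := Nat.pos_of_ne_zero hgne'
    set g : ℤ := (Int.gcd p r : ℤ) with hgdef
    have hgne : g ≠ 0 := by rw [hgdef]; exact_mod_cast hgne'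
    have hga : p = g * (p / g) := (Int.mul_ediv_cancel' (Int.gcd_dvd_left _ _)).symm
    have hgb : r = g * (r / g) := (Int.mul_ediv_cancel' (Int.gcd_dvd_right _ _)).symm
    set a : ℤ := p / g with hadef
    set b : ℤ := r / g with hbdef
    have hab : Int.gcd a b = 1 := Int.gcd_div_gcd_div_gcd hgpos
    obtain ⟨x, y, hxy⟩ := Int.isCoprime_iff_gcd_eq_one.mpr hab
    have hpa : p * a + q * b = 0 := by
      apply mul_left_cancel₀ hgne
      rw [mul_zero]
      calc g * (p * a + q * b) = p * (g * a) + q * (g * b) := by ring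
        _ = p * p + q * r := by rw [← hga, ← hgb]
        _ = 0 := hD
    have hra : r * a + s * b = 0 := by
      apply mul_left_cancel₀ hgne
      rw [mul_zero]
      calc g * (r * a + s * b) = r * (g * a) + s * (g * b) := by ring
        _ = r * p + s * r := by rw [← hga, ← hgb]
        _ = 0 := by rw [hsp]; ring
    clear_value g a b
    clear h3 htr e11 e21 hpD hrD hD hga hgb hadef hbdef hgdef hgne hgne' hgpos hab hpr hcol hu hv hp hq hr hs
    have hSinv : (!![1, 0, 0; 0, a, -y; 0, b, x] : Matrix (Fin 3) (Fin 3) ℤ)⁻¹ =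
        !![1, 0, 0; 0, x, y; 0, -b, a] := by
      apply Matrix.inv_eq_right_inv
      rw [Matrix.mul_fin_three, Matrix.one_fin_three]
      ring_nf
      rw [show x * a + b * y = 1 by linear_combination hxy]
    refine ⟨!![1, 0, 0; 0, a, -y; 0, b, x], ?_, ?_, ?_⟩
    · simp [Matrix.det_fin_three]
      linear_combination hxy
    · intro i j hij
      rw [hSinv, hA, Matrix.mul_fin_three, Matrix.mul_fin_three]
      fin_cases i <;> fin_cases j <;>
        first
          | exact absurd hij (by decide)
          | (simp [Matrix.vecHead, Matrix.vecTail]; try linear_combination (-b) * hpa + a * hra)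
    · intro i
      rw [hSinv, hA, Matrix.mul_fin_three, Matrix.mul_fin_three]
      fin_cases i
      · simp
      · simp
        linear_combination x * hpa + y * hra
      · simp
        linear_combination (-x) * hpa + (-y) * hra + (x * a + y * b) * hsp

open Matrix in

theorem sl3_unipotent_conjugate_upper_triangular (M : Matrix (Fin 3) (Fin 3) ℤ)
    (hdet : M.det = 1) (h : M.charpoly = (X - 1) ^ 3) :
    ∃ T : Matrix (Fin 3) (Fin 3) ℤ, T.det = 1 ∧
      (∀ i j : Fin 3, j < i → (T * M * T⁻¹) i j = 0) ∧
      (∀ i : Fin 3, (T * M * T⁻¹) i i = 1) := by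
  set N := M - 1 with hN
  -- Cayley–Hamilton
  have hN3 : N * N * N = 0 := by
    have hCH := Matrix.aeval_self_charpoly M
    rw [h] at hCH
    have he : aeval M ((X - 1 : ℤ[X]) ^ 3) = (M - 1) ^ 3 := by
      rw [map_pow, map_sub, aeval_X, _root_.map_one]
    rw [he] at hCH
    have hcube : (M - 1) ^ 3 = (M - 1) * (M - 1) * (M - 1) := by
      rw [pow_succ, pow_succ, pow_one]
    rw [hcube] at hCH
    exact hCH
  -- trace of N is 0
  have htrN : N.trace = 0 := by
    have htrM := Matrix.trace_eq_neg_charpoly_coeff M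
    rw [h] at htrM
    have hexp : ((X : ℤ[X]) - 1) ^ 3 = X ^ 3 - C 3 * X ^ 2 + C 3 * X - C 1 := by
      simp only [map_ofNat, Polynomial.C_1]
      ring
    have hcoeff : (((X : ℤ[X]) - 1) ^ 3).coeff (Fintype.card (Fin 3) - 1) = -3 := by
      rw [hexp]
      norm_num [coeff_sub, coeff_add, coeff_C_mul, coeff_X_pow, coeff_C, coeff_X, coeff_one]
    rw [hcoeff] at htrM
    rw [hN, Matrix.trace_sub, htrM, Matrix.trace_one]
    simp
  -- kernel vector
  have hker : ∃ w : Fin 3 → ℤ, w ≠ 0 ∧ N.mulVec w = 0 := by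
    by_cases h0 : N = 0
    · refine ⟨Pi.single 0 1, ?_, by rw [h0]; exact Matrix.zero_mulVec _⟩
      intro hcontra
      have := congrFun hcontra 0
      simp at this
    · have hentry : ∃ i j, N i j ≠ 0 := by
        by_contra hc
        push_neg at hc
        exact h0 (by ext i j; simpa using hc i j)
      by_cases h2 : N * N = 0
      · obtain ⟨i, j, hij⟩ := hentry
        refine ⟨fun k => N k j, ?_, ?_⟩
        · intro hcontra
          exact hij (congrFun hcontra i)
        · funext l
          have : N.mulVec (fun k => N k j) l = (N * N) l j := by
            simp [Matrix.mulVec, dotProduct, Matrix.mul_apply]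
          rw [this, h2]
          rfl
      · have hentry2 : ∃ i j, (N * N) i j ≠ 0 := by
          by_contra hc
          push_neg at hc
          exact h2 (by ext i j; simpa using hc i j)
        obtain ⟨i, j, hij⟩ := hentry2
        refine ⟨fun k => (N * N) k j, ?_, ?_⟩
        · intro hcontra
          exact hij (congrFun hcontra i)
        · funext l
          have : N.mulVec (fun k => (N * N) k j) l = (N * (N * N)) l j := by
            simp [Matrix.mulVec, dotProduct, Matrix.mul_apply]
          rw [this, ← Matrix.mul_assoc, hN3]
          rfl
  obtain ⟨w, hw0, hwker⟩ := hker
  obtain ⟨g, u, hgne, hgu, hgcd⟩ := sl3aux_primitive3 w hw0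
  have hNu : N.mulVec u = 0 := by
    have hw' : w = g • u := by
      funext i
      rw [hgu i]
      simp
    rw [hw', Matrix.mulVec_smul] at hwker
    funext i
    have := congrFun hwker i
    simp at this
    rcases this with h' | h'
    · exact absurd h' hgne
    · simpa using h'
  obtain ⟨P, hdetP, hP00, hP10, hP20⟩ := sl3aux_extend_col (u 0) (u 1) (u 2) hgcd
  have hPunit : IsUnit P.det := by rw [hdetP]; exact isUnit_one
  set A := P⁻¹ * N * P with hA
  have hNP : ∀ i, (N * P) i 0 = 0 := by
    intro i
    have hh := congrFun hNu i
    simp [Matrix.mulVec, dotProduct, Fin.sum_univ_three] at hh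
    rw [Matrix.mul_apply, Fin.sum_univ_three, hP00, hP10, hP20]
    linear_combination hh
  have hcol : ∀ i, A i 0 = 0 := by
    intro i
    rw [hA, Matrix.mul_assoc, Matrix.mul_apply, Fin.sum_univ_three, hNP 0, hNP 1, hNP 2]
    ring
  have key : ∀ B C : Matrix (Fin 3) (Fin 3) ℤ,
      (P⁻¹ * B * P) * (P⁻¹ * C * P) = P⁻¹ * (B * C) * P := by
    intro B C
    simp only [Matrix.mul_assoc, Matrix.mul_nonsing_inv_cancel_left _ _ hPunit]
  have h3A : A * A * A = 0 := by
    rw [hA, key, key, hN3, Matrix.mul_zero, Matrix.zero_mul]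
  have htrA : A.trace = 0 := by
    rw [hA, Matrix.trace_mul_comm (P⁻¹ * N) P, ← Matrix.mul_assoc,
      Matrix.mul_nonsing_inv P hPunit, Matrix.one_mul]
    exact htrN
  obtain ⟨S, hdetS, hlow, hdiag⟩ := sl3aux_stage2 A hcol h3A htrA
  have hSunit : IsUnit S.det := by rw [hdetS]; exact isUnit_one
  have hdetPS : (P * S).det = 1 := by rw [Matrix.det_mul, hdetP, hdetS, one_mul]
  have hPSunit : IsUnit (P * S).det := by rw [hdetPS]; exact isUnit_one
  have hTinv : ((P * S)⁻¹)⁻¹ = P * S := Matrix.nonsing_inv_nonsing_inv _ hPSunit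
  have hfinal : (P * S)⁻¹ * M * ((P * S)⁻¹)⁻¹ = S⁻¹ * A * S + 1 := by
    rw [hTinv, Matrix.mul_inv_rev]
    have hMN : M = N + 1 := by rw [hN]; abel
    rw [hMN]
    have h1 : S⁻¹ * P⁻¹ * N * (P * S) = S⁻¹ * A * S := by
      rw [hA]
      simp only [Matrix.mul_assoc]
    have h2 : S⁻¹ * P⁻¹ * (P * S) = 1 := by
      rw [Matrix.mul_assoc, Matrix.nonsing_inv_mul_cancel_left _ _ hPunit,
        Matrix.nonsing_inv_mul _ hSunit]
    calc S⁻¹ * P⁻¹ * (N + 1) * (P * S)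
        = S⁻¹ * P⁻¹ * N * (P * S) + S⁻¹ * P⁻¹ * (P * S) := by
          rw [Matrix.mul_add, Matrix.mul_one, Matrix.add_mul]
      _ = S⁻¹ * A * S + 1 := by rw [h1, h2]
  have hdetT : ((P * S)⁻¹).det = 1 := by
    rw [Matrix.det_nonsing_inv, hdetPS, Ring.inverse_one]
  refine ⟨(P * S)⁻¹, hdetT, ?_, ?_⟩
  · intro i j hij
    rw [hfinal, Matrix.add_apply, hlow i j hij, Matrix.one_apply_ne (ne_of_gt hij)]
    ring
  · intro i
    rw [hfinal, Matrix.add_apply, hdiag i, Matrix.one_apply_eq, zero_add]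
end

section
/- If M ∈ SL(3,ℤ) has eigenvalues 1, -1, -1 (characteristic polynomial (x-1)(x+1)²), then M is conjugate in SL(3,ℤ) to an upper triangular matrix with diagonal (1, -1, -1). -/
open Polynomial

private lemma bezout2 {m n : ℤ} (h : Int.gcd m n = 1) : ∃ x y : ℤ, m * x + n * y = 1 := by
  refine ⟨Int.gcdA m n, Int.gcdB m n, ?_⟩
  have h2 := Int.gcd_eq_gcd_ab m n
  rw [h] at h2
  push_cast at h2
  linarith

private lemma key2 (a b c d : ℤ) (h1 : a * d - b * c = 1) (h2 : a + d = -2) :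
    ∃ s t x y : ℤ, s * x + t * y = 1 ∧ a * s + b * t = -s ∧ c * s + d * t = -t := by
  have hN : (a + 1) * (d + 1) = b * c := by linear_combination h1 + h2
  by_cases hab : a + 1 = 0 ∧ b = 0
  · exact ⟨0, 1, 0, 1, by ring, by simp [hab.2], by linear_combination h2 - hab.1⟩
  · have hg0 : Int.gcd b (a + 1) ≠ 0 := by
      intro hz
      rw [Int.gcd_eq_zero_iff] at hz
      exact hab ⟨hz.2, hz.1⟩
    set g : ℕ := Int.gcd b (a + 1) with hgdef
    have hgz : (g : ℤ) ≠ 0 := by exact_mod_cast hg0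
    have hdvd1 : (g : ℤ) ∣ b := Int.gcd_dvd_left b (a + 1)
    have hdvd2 : (g : ℤ) ∣ (a + 1) := Int.gcd_dvd_right b (a + 1)
    set s : ℤ := b / (g : ℤ) with hsdef
    set t : ℤ := -((a + 1) / (g : ℤ)) with htdef
    have hb : b = (g : ℤ) * s := (Int.mul_ediv_cancel' hdvd1).symm
    have ha1 : a + 1 = -((g : ℤ) * t) := by
      rw [htdef, mul_neg, neg_neg]
      exact (Int.mul_ediv_cancel' hdvd2).symm
    have hst : Int.gcd s t = 1 := by
      have h4 : Int.gcd (b / (g : ℤ)) ((a + 1) / (g : ℤ)) = 1 :=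
        Int.gcd_div_gcd_div_gcd (Nat.pos_of_ne_zero hg0)
      rw [hsdef, htdef]
      simpa [Int.gcd, Int.natAbs_neg] using h4
    obtain ⟨x, y, hxy⟩ := bezout2 hst
    refine ⟨s, t, x, y, hxy, ?_, ?_⟩
    · linear_combination s * ha1 + t * hb
    · have h5 : (g : ℤ) * (c * s + d * t) = (g : ℤ) * (-t) := by
        linear_combination (-c) * hb + (d + 1) * ha1 - hN
      exact mul_left_cancel₀ hgz h5

private lemma key3 (w : Fin 3 → ℤ) (hw : Int.gcd (w 0) (Int.gcd (w 1) (w 2)) = 1) :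
    ∃ U : Matrix (Fin 3) (Fin 3) ℤ, U.det = 1 ∧ U 0 0 = w 0 ∧ U 1 0 = w 1 ∧ U 2 0 = w 2 := by
  by_cases hg : Int.gcd (w 1) (w 2) = 0
  · obtain ⟨h1, h2⟩ := Int.gcd_eq_zero_iff.mp hg
    have h0 : w 0 = 1 ∨ w 0 = -1 := by
      rw [hg] at hw
      have : (w 0).natAbs = 1 := by simpa [Int.gcd] using hw
      omega
    refine ⟨!![w 0, 0, 0; 0, w 0, 0; 0, 0, 1], ?_, rfl, by rw [h1]; rfl, by rw [h2]; rfl⟩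
    rcases h0 with h | h <;> simp [Matrix.det_fin_three, h]
  · have hgz : ((Int.gcd (w 1) (w 2) : ℕ) : ℤ) ≠ 0 := by exact_mod_cast hg
    set g : ℕ := Int.gcd (w 1) (w 2) with hgdef
    have hdvd1 : (g : ℤ) ∣ w 1 := Int.gcd_dvd_left (w 1) (w 2)
    have hdvd2 : (g : ℤ) ∣ w 2 := Int.gcd_dvd_right (w 1) (w 2)
    set β : ℤ := w 1 / (g : ℤ) with hβ
    set γ : ℤ := w 2 / (g : ℤ) with hγ
    have hb : w 1 = (g : ℤ) * β := (Int.mul_ediv_cancel' hdvd1).symm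
    have hc : w 2 = (g : ℤ) * γ := (Int.mul_ediv_cancel' hdvd2).symm
    have hpq' := Int.gcd_eq_gcd_ab (w 1) (w 2)
    set p : ℤ := Int.gcdA (w 1) (w 2) with hp
    set q : ℤ := Int.gcdB (w 1) (w 2) with hq
    have hpq : w 1 * p + w 2 * q = (g : ℤ) := by rw [hgdef]; linarith [hpq']
    obtain ⟨r, s, hrs⟩ := bezout2 hw
    have h5 : β * p + γ * q = 1 := by
      apply mul_left_cancel₀ hgz
      linear_combination hpq - p * hb - q * hc
    refine ⟨!![w 0, -s, 0; w 1, r * β, -q; w 2, r * γ, p], ?_, rfl, rfl, rfl⟩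
    rw [Matrix.det_fin_three]
    simp
    linear_combination (w 0) * r * h5 + s * hpq + hrs

private lemma key1 (M : Matrix (Fin 3) (Fin 3) ℤ) (hdet : (M - 1).det = 0) :
    ∃ w : Fin 3 → ℤ, M.mulVec w = w ∧ Int.gcd (w 0) (Int.gcd (w 1) (w 2)) = 1 := by
  obtain ⟨v, hv0, hv⟩ := Matrix.exists_mulVec_eq_zero_iff.mpr hdet
  have hMv : M.mulVec v = v := by
    rw [Matrix.sub_mulVec, Matrix.one_mulVec, sub_eq_zero] at hv
    exact hv
  set d : ℕ := Int.gcd (v 0) (Int.gcd (v 1) (v 2)) with hd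
  have hdne : d ≠ 0 := by
    intro h0
    apply hv0
    rw [hd] at h0
    rw [Int.gcd_eq_zero_iff] at h0
    obtain ⟨h1, h2⟩ := h0
    have h3 : Int.gcd (v 1) (v 2) = 0 := by exact_mod_cast h2
    rw [Int.gcd_eq_zero_iff] at h3
    funext i
    fin_cases i
    · exact h1
    · exact h3.1
    · exact h3.2
  have hdz : ((d : ℕ) : ℤ) ≠ 0 := by exact_mod_cast hdne
  have hdvd : ∀ i, ((d : ℕ) : ℤ) ∣ v i := by
    intro i
    fin_cases i
    · exact Int.gcd_dvd_left (v 0) (Int.gcd (v 1) (v 2))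
    · exact dvd_trans (Int.gcd_dvd_right (v 0) (Int.gcd (v 1) (v 2))) (Int.gcd_dvd_left (v 1) (v 2))
    · exact dvd_trans (Int.gcd_dvd_right (v 0) (Int.gcd (v 1) (v 2))) (Int.gcd_dvd_right (v 1) (v 2))
  set w : Fin 3 → ℤ := fun i => v i / (d : ℤ) with hwdef
  have hvw : ∀ i, v i = (d : ℤ) * w i := fun i => (Int.mul_ediv_cancel' (hdvd i)).symm
  have hveq : v = ((d : ℤ)) • w := by
    funext i
    simpa using hvw i
  have hMw : M.mulVec w = w := by
    rw [hveq, Matrix.mulVec_smul] at hMv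
    exact smul_right_injective _ hdz hMv
  refine ⟨w, hMw, ?_⟩
  have hinner : Int.gcd (v 1) (v 2) = d * Int.gcd (w 1) (w 2) := by
    rw [hvw 1, hvw 2, Int.gcd_mul_left]
    simp
  have houter : d = d * Int.gcd (w 0) (Int.gcd (w 1) (w 2)) := by
    conv_lhs => rw [hd, hvw 0, hinner]
    rw [show ((d * Int.gcd (w 1) (w 2) : ℕ) : ℤ) = (d : ℤ) * ((Int.gcd (w 1) (w 2) : ℕ) : ℤ) by
      push_cast; ring]
    rw [Int.gcd_mul_left]
    simp
  have hfin := mul_left_cancel₀ hdne (houter.symm.trans (mul_one d).symm)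
  exact hfin

set_option maxHeartbeats 1000000 in
theorem sl3_eigenvalues_one_negone_negone_conjugate_upper_triangular
    (M : Matrix (Fin 3) (Fin 3) ℤ) (hdet : M.det = 1)
    (h : M.charpoly = (X - 1) * (X + 1) ^ 2) :
    ∃ T : Matrix (Fin 3) (Fin 3) ℤ, T.det = 1 ∧
      (∀ i j : Fin 3, j < i → (T * M * T⁻¹) i j = 0) ∧
      (T * M * T⁻¹) 0 0 = 1 ∧ (T * M * T⁻¹) 1 1 = -1 ∧ (T * M * T⁻¹) 2 2 = -1 := by
  -- char poly facts
  have hdet1 : (M - 1).det = 0 := by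
    have h1 := congrArg (Polynomial.eval (1 : ℤ)) h
    rw [Matrix.charpoly, ← Polynomial.coe_evalRingHom, RingHom.map_det] at h1
    have h2 : (Matrix.charmatrix M).map (Polynomial.evalRingHom (1 : ℤ)) = 1 - M := by
      ext i j
      by_cases hij : i = j
      · subst hij
        simp [Matrix.charmatrix_apply_eq, Matrix.map_apply]
      · simp [Matrix.charmatrix_apply_ne _ _ _ hij, Matrix.map_apply, Matrix.one_apply_ne hij]
    rw [RingHom.mapMatrix_apply, h2] at h1
    have h3 : (M - 1) = -(1 - M) := (neg_sub _ _).symm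
    rw [h3, Matrix.det_neg]
    simp at h1 ⊢
    simp [h1]
  have htrM : M.trace = -1 := by
    have ht := Matrix.trace_eq_neg_charpoly_coeff M
    rw [h] at ht
    have hexp : ((X - 1) * (X + 1) ^ 2 : ℤ[X]) = X ^ 3 + X ^ 2 - X - 1 := by ring
    rw [hexp] at ht
    norm_num [coeff_add, coeff_sub, coeff_X_pow, coeff_one, coeff_X] at ht
    exact ht
  obtain ⟨w, hMw, hwprim⟩ := key1 M hdet1
  obtain ⟨U, hU, hU0, hU1, hU2⟩ := key3 w hwprim
  have hUunit : IsUnit U.det := by rw [hU]; exact isUnit_one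
  set A : Matrix (Fin 3) (Fin 3) ℤ := U⁻¹ * M * U with hA
  have hUe : U.mulVec (Pi.single (0 : Fin 3) (1 : ℤ)) = w := by
    rw [Matrix.mulVec_single]
    funext i
    fin_cases i <;> simp [hU0, hU1, hU2]
  have hAe : A.mulVec (Pi.single (0 : Fin 3) (1 : ℤ)) = Pi.single (0 : Fin 3) (1 : ℤ) := by
    rw [hA, ← Matrix.mulVec_mulVec, hUe, ← Matrix.mulVec_mulVec, hMw, ← hUe,
      Matrix.mulVec_mulVec, Matrix.nonsing_inv_mul U hUunit, Matrix.one_mulVec]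
  have hA00 : A 0 0 = 1 := by have := congrFun hAe 0; simpa using this
  have hA10 : A 1 0 = 0 := by have := congrFun hAe 1; simpa using this
  have hA20 : A 2 0 = 0 := by have := congrFun hAe 2; simpa using this
  have hdetU' : U⁻¹.det = 1 := by rw [Matrix.det_nonsing_inv, hU]; simp
  have hdetA : A.det = 1 := by rw [hA, Matrix.det_mul, Matrix.det_mul, hdetU', hdet, hU]; ring
  have htrA : A.trace = -1 := by
    rw [hA, Matrix.trace_mul_cycle, Matrix.mul_nonsing_inv U hUunit, Matrix.one_mul, htrM]
  have hdet2 : A 1 1 * A 2 2 - A 1 2 * A 2 1 = 1 := by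
    have h9 := Matrix.det_fin_three A
    rw [hdetA, hA00, hA10, hA20] at h9
    linear_combination -h9
  have htr2 : A 1 1 + A 2 2 = -2 := by
    have h9 := Matrix.trace_fin_three A
    rw [htrA, hA00] at h9
    linarith
  obtain ⟨s, t, x, y, hbez, hrow1, hrow2⟩ := key2 (A 1 1) (A 1 2) (A 2 1) (A 2 2) hdet2 htr2
  set V : Matrix (Fin 3) (Fin 3) ℤ := !![1, 0, 0; 0, x, y; 0, -t, s] with hV
  set V' : Matrix (Fin 3) (Fin 3) ℤ := !![1, 0, 0; 0, s, -y; 0, t, x] with hV'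
  have hVV' : V * V' = 1 := by
    rw [hV, hV', Matrix.mul_fin_three, Matrix.one_fin_three]
    ext i j
    fin_cases i <;> fin_cases j <;> norm_num <;> linarith [hbez]
  have hdetV : V.det = 1 := by
    rw [hV, Matrix.det_fin_three]
    simp
    linarith [hbez]
  have hVinv : V⁻¹ = V' := Matrix.inv_eq_right_inv hVV'
  have hV'V : V' * V = 1 := mul_eq_one_comm.mp hVV'
  have hTi : (V * U⁻¹)⁻¹ = U * V' := by
    rw [Matrix.mul_inv_rev, Matrix.nonsing_inv_nonsing_inv U hUunit, hVinv]
  have hT : (V * U⁻¹) * M * (V * U⁻¹)⁻¹ = V * A * V' := by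
    rw [hTi, hA]
    simp only [Matrix.mul_assoc]
  have hprod : ∀ i j, (V * A * V') i j =
      (!![1, 0, 0; 0, x, y; 0, -t, s] *
        !![A 0 0, A 0 1, A 0 2; A 1 0, A 1 1, A 1 2; A 2 0, A 2 1, A 2 2] *
        !![1, 0, 0; 0, s, -y; 0, t, x]) i j := by
    intro i j
    rw [hV, hV', ← Matrix.eta_fin_three A]
  have e10 : (V * A * V') 1 0 = 0 := by
    rw [hprod, Matrix.mul_fin_three, Matrix.mul_fin_three]
    norm_num
    linear_combination x * hA10 + y * hA20
  have e20 : (V * A * V') 2 0 = 0 := by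
    rw [hprod, Matrix.mul_fin_three, Matrix.mul_fin_three]
    simp
    linear_combination (-t) * hA10 + s * hA20
  have e21 : (V * A * V') 2 1 = 0 := by
    rw [hprod, Matrix.mul_fin_three, Matrix.mul_fin_three]
    simp
    linear_combination s * hrow2 - t * hrow1
  have e00 : (V * A * V') 0 0 = 1 := by
    rw [hprod, Matrix.mul_fin_three, Matrix.mul_fin_three]
    norm_num
    linear_combination hA00
  have e11 : (V * A * V') 1 1 = -1 := by
    rw [hprod, Matrix.mul_fin_three, Matrix.mul_fin_three]
    norm_num
    linear_combination x * hrow1 + y * hrow2 - hbez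
  have e22 : (V * A * V') 2 2 = -1 := by
    have htrP : (V * A * V').trace = -1 := by
      rw [Matrix.trace_mul_cycle, ← Matrix.mul_assoc, hV'V, Matrix.one_mul, htrA]
    have h9 := Matrix.trace_fin_three (V * A * V')
    rw [htrP, e00, e11] at h9
    linarith
  refine ⟨V * U⁻¹, by rw [Matrix.det_mul, hdetV, hdetU']; ring, ?_,
    by rw [hT]; exact e00, by rw [hT]; exact e11, by rw [hT]; exact e22⟩
  intro i j hij
  rw [hT]
  fin_cases i <;> fin_cases j <;>
    first
      | exact absurd hij (by decide)
      | exact e10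
      | exact e20
      | exact e21
end

section
/- The matrix [[1, a],[0, A]] ∈ SL(3,ℤ) with A ∈ SL(2,ℤ) is conjugate in SL(3,ℤ) to [[1, 0],[0, A']] for some A' ∈ SL(2,ℤ) if and only if the row vector a lies in the image of the map d ↦ d(A - I) on integer row vectors, up to conjugating A. -/
open Matrix

theorem block_diagonalisable_iff_in_image (a : Matrix (Fin 1) (Fin 2) ℤ)
    (A : Matrix (Fin 2) (Fin 2) ℤ) (hA : A.det = 1) :
    (∃ d : Matrix (Fin 1) (Fin 2) ℤ, ∃ D : Matrix (Fin 2) (Fin 2) ℤ, D.det = 1 ∧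
        ∃ A' : Matrix (Fin 2) (Fin 2) ℤ, A'.det = 1 ∧
          (Matrix.fromBlocks (1 : Matrix (Fin 1) (Fin 1) ℤ) d 0 D)⁻¹ *
              Matrix.fromBlocks (1 : Matrix (Fin 1) (Fin 1) ℤ) a 0 A *
              Matrix.fromBlocks (1 : Matrix (Fin 1) (Fin 1) ℤ) d 0 D =
            Matrix.fromBlocks (1 : Matrix (Fin 1) (Fin 1) ℤ) 0 0 A') ↔
      ∃ d : Matrix (Fin 1) (Fin 2) ℤ, a = d * (A - 1) := by
  constructor
  · rintro ⟨d, D, hD, A', hA', h⟩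
    set B := Matrix.fromBlocks (1 : Matrix (Fin 1) (Fin 1) ℤ) d 0 D with hB
    have hdet : B.det = 1 := by
      rw [hB, Matrix.det_fromBlocks_zero₂₁, Matrix.det_one, one_mul, hD]
    have hu : IsUnit B.det := hdet ▸ isUnit_one
    have hDu : IsUnit D.det := hD ▸ isUnit_one
    have key : Matrix.fromBlocks 1 a 0 A * B =
        B * Matrix.fromBlocks (1 : Matrix (Fin 1) (Fin 1) ℤ) 0 0 A' := by
      have h2 := congrArg (fun M => B * M) h
      rw [← Matrix.mul_assoc, ← Matrix.mul_assoc, Matrix.mul_nonsing_inv _ hu,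
        Matrix.one_mul] at h2
      exact h2
    rw [Matrix.fromBlocks_multiply, Matrix.fromBlocks_multiply] at key
    have h12 : d + a * D = d * A' := by
      have := congrArg Matrix.toBlocks₁₂ key
      simpa [Matrix.toBlocks_fromBlocks₁₂] using this
    have h22 : A * D = D * A' := by
      have := congrArg Matrix.toBlocks₂₂ key
      simpa [Matrix.toBlocks_fromBlocks₂₂] using this
    have hDi : D * D⁻¹ = 1 := Matrix.mul_nonsing_inv D hDu
    have hDi' : D⁻¹ * D = 1 := Matrix.nonsing_inv_mul D hDu
    have hc : A' * D⁻¹ = D⁻¹ * A := by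
      have : D⁻¹ * (A * D) * D⁻¹ = D⁻¹ * (D * A') * D⁻¹ := by rw [h22]
      calc A' * D⁻¹ = (D⁻¹ * D) * (A' * D⁻¹) := by rw [hDi', Matrix.one_mul]
        _ = D⁻¹ * (D * A') * D⁻¹ := by
            rw [Matrix.mul_assoc, Matrix.mul_assoc, Matrix.mul_assoc]
        _ = D⁻¹ * (A * D) * D⁻¹ := by rw [h22]
        _ = D⁻¹ * A * (D * D⁻¹) := by
            rw [Matrix.mul_assoc, Matrix.mul_assoc, Matrix.mul_assoc]
        _ = D⁻¹ * A := by rw [hDi, Matrix.mul_one]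
    refine ⟨d * D⁻¹, ?_⟩
    calc a = a * (D * D⁻¹) := by rw [hDi, Matrix.mul_one]
      _ = (a * D) * D⁻¹ := by rw [Matrix.mul_assoc]
      _ = (d * A' - d) * D⁻¹ := by rw [← h12]; congr 1; abel
      _ = d * (A' * D⁻¹) - d * D⁻¹ := by rw [Matrix.sub_mul, Matrix.mul_assoc]
      _ = d * (D⁻¹ * A) - d * D⁻¹ := by rw [hc]
      _ = (d * D⁻¹) * (A - 1) := by
          rw [Matrix.mul_sub, Matrix.mul_one, Matrix.mul_assoc]
  · rintro ⟨d, hd⟩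
    refine ⟨d, 1, Matrix.det_one, A, hA, ?_⟩
    have hinv : (Matrix.fromBlocks (1 : Matrix (Fin 1) (Fin 1) ℤ) d 0 1)⁻¹ =
        Matrix.fromBlocks (1 : Matrix (Fin 1) (Fin 1) ℤ) (-d) 0
          (1 : Matrix (Fin 2) (Fin 2) ℤ) := by
      apply Matrix.inv_eq_right_inv
      rw [Matrix.fromBlocks_multiply]
      rw [← Matrix.fromBlocks_one]
      congr 1 <;> simp
    rw [hinv, Matrix.fromBlocks_multiply, Matrix.fromBlocks_multiply]
    congr 1 <;> simp [hd, Matrix.sub_mul, Matrix.mul_sub] <;> abel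
end

section
/- If M ∈ SL(2,ℤ) has a nonzero integer fixed vector (M μ = μ with μ ≠ 0), then M is conjugate in SL(2,ℤ) to [[1, m],[0, 1]] for some m ∈ ℤ, and the conjugated fixed vector has second component 0. -/
theorem sl2_fixed_vector_normal_form (M : Matrix (Fin 2) (Fin 2) ℤ) (hdet : M.det = 1)
    (μ : Fin 2 → ℤ) (hμ : μ ≠ 0) (hMμ : M.mulVec μ = μ) :
    ∃ T : Matrix (Fin 2) (Fin 2) ℤ, T.det = 1 ∧
      (∃ m : ℤ, T * M * T⁻¹ = !![1, m; 0, 1]) ∧ T.mulVec μ 1 = 0 := by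
  set a := μ 0 with ha0
  set b := μ 1 with hb0
  set g : ℤ := (Int.gcd a b : ℤ) with hgdef
  have hg : g ≠ 0 := by
    intro h
    have : a = 0 ∧ b = 0 := by
      rw [hgdef] at h
      exact Int.gcd_eq_zero_iff.mp (by exact_mod_cast h)
    apply hμ
    funext i
    fin_cases i
    · exact this.1
    · exact this.2
  set x : ℤ := Int.gcdA a b with hxdef
  set y : ℤ := Int.gcdB a b with hydef
  have hbez : g = a * x + b * y := Int.gcd_eq_gcd_ab a b
  have hga : g * (a / g) = a := Int.mul_ediv_cancel' (Int.gcd_dvd_left a b)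
  have hgb : g * (b / g) = b := Int.mul_ediv_cancel' (Int.gcd_dvd_right a b)
  set a' : ℤ := a / g with ha'
  set b' : ℤ := b / g with hb'
  set T : Matrix (Fin 2) (Fin 2) ℤ := !![x, y; -b', a'] with hT
  have hdetT : T.det = 1 := by
    have h1 : T.det = x * a' + y * b' := by
      rw [hT, Matrix.det_fin_two_of]; ring
    have : g * (x * a' + y * b') = g * 1 := by
      have : x * (g * a') + y * (g * b') = g * 1 := by
        rw [hga, hgb]; linarith [hbez]
      linarith [this]
    rw [h1, mul_left_cancel₀ hg this]
  have hν1 : T.mulVec μ 1 = 0 := by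
    have h1 : T.mulVec μ 1 = -b' * a + a' * b := by
      simp [hT, Matrix.mulVec, dotProduct, Fin.sum_univ_two, Matrix.vecHead, Matrix.vecTail, ha0, hb0]
    have : g * (-b' * a + a' * b) = g * 0 := by
      have h2 : -(g * b') * a + (g * a') * b = 0 := by rw [hga, hgb]; ring
      nlinarith [h2]
    rw [h1, mul_left_cancel₀ hg this]
  have hν0 : T.mulVec μ 0 = g := by
    have h1 : T.mulVec μ 0 = x * a + y * b := by
      simp [hT, Matrix.mulVec, dotProduct, Fin.sum_univ_two, Matrix.vecHead, Matrix.vecTail, ha0, hb0]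
    rw [h1]; linarith [hbez]
  have hTu : IsUnit T.det := by rw [hdetT]; exact isUnit_one
  have hTinv : T⁻¹ * T = 1 := Matrix.nonsing_inv_mul T hTu
  set N : Matrix (Fin 2) (Fin 2) ℤ := T * M * T⁻¹ with hN
  have hNν : N.mulVec (T.mulVec μ) = T.mulVec μ := by
    rw [hN, Matrix.mulVec_mulVec, mul_assoc, mul_assoc, hTinv, mul_one,
      ← Matrix.mulVec_mulVec, hMμ]
  have hNdet : N.det = 1 := by
    rw [hN, Matrix.det_mul, Matrix.det_mul, hdetT, hdet, Matrix.det_nonsing_inv, hdetT]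
    simp
  obtain ⟨ν, hνdef⟩ : ∃ ν, T.mulVec μ = ν := ⟨_, rfl⟩
  rw [hνdef] at hNν hν0 hν1
  have h0 := congrFun hNν 0
  have h1 := congrFun hNν 1
  simp [Matrix.mulVec, dotProduct, Fin.sum_univ_two, hν1, hν0] at h0 h1
  have hN00 : N 0 0 = 1 := by
    have : N 0 0 * g = 1 * g := by linarith [h0]
    exact mul_right_cancel₀ hg this
  have hN10 : N 1 0 = 0 := h1.resolve_right hg
  have hN11 : N 1 1 = 1 := by
    have hd : N 0 0 * N 1 1 - N 0 1 * N 1 0 = 1 := by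
      rw [← Matrix.det_fin_two, hNdet]
    rw [hN00, hN10] at hd; linarith
  refine ⟨T, hdetT, ⟨N 0 1, ?_⟩, by rw [hνdef]; exact hν1⟩
  show N = _
  ext i j
  fin_cases i <;> fin_cases j <;> simp [hN00, hN10, hN11]
end

section
/- If M ∈ SL(3,ℤ) has characteristic polynomial (x-1)³ and the eigenspace of eigenvalue 1 has dimension 2 (geometric multiplicity 2 over ℚ), then M is conjugate in SL(3,ℤ) to a matrix with exactly one possibly-nonzero off-diagonal entry: [[1, 0, m],[0, 1, 0],[0, 0, 1]] for some m ∈ ℤ (after a suitable choice of which entry). -/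
open Polynomial

namespace SL3AuxNF

open Matrix

/-- Coordinatewise cast `ℤ³ → ℚ³` as a `ℤ`-linear map. -/
noncomputable def phi : (Fin 3 → ℤ) →ₗ[ℤ] (Fin 3 → ℚ) where
  toFun x i := (x i : ℚ)
  map_add' x y := by funext i; simp
  map_smul' z x := by
    funext i
    simp only [Pi.smul_apply, smul_eq_mul, RingHom.id_apply, zsmul_eq_mul]
    push_cast
    ring

lemma phi_injective : Function.Injective phi := by
  intro x y h
  funext i
  have h2 : ((x i : ℚ)) = (y i : ℚ) := congrFun h i
  exact_mod_cast h2

lemma phi_mulVec (A : Matrix (Fin 3) (Fin 3) ℤ) (x : Fin 3 → ℤ) :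
    phi (A.mulVec x) = (A.map (Int.castRingHom ℚ)).mulVec (phi x) := by
  funext i
  simp only [phi, LinearMap.coe_mk, AddHom.coe_mk, Matrix.mulVec, dotProduct,
    Matrix.map_apply, Int.coe_castRingHom]
  push_cast
  rfl

lemma card_eq_one {n : ℕ} (N : Matrix (Fin 3) (Fin 3) ℤ)
    (bN : Module.Basis (Fin n) ℤ ↥(LinearMap.range N.mulVecLin))
    (h : (N.map (Int.castRingHom ℚ)).rank = 1) : n = 1 := by
  classical
  set R := LinearMap.range N.mulVecLin with hR
  set u : Fin n → (Fin 3 → ℚ) := fun i => phi ((bN i : Fin 3 → ℤ)) with hu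
  have hinj : Function.Injective (phi.comp R.subtype) :=
    phi_injective.comp Subtype.coe_injective
  have hindZ : LinearIndependent ℤ u :=
    (bN.linearIndependent).map' (phi.comp R.subtype) (LinearMap.ker_eq_bot.mpr hinj)
  have hindQ : LinearIndependent ℚ u := (LinearIndependent.iff_fractionRing ℤ ℚ).mp hindZ
  have hspan : Submodule.span ℚ (Set.range u) =
      LinearMap.range (N.map (Int.castRingHom ℚ)).mulVecLin := by
    apply le_antisymm
    · rw [Submodule.span_le]
      rintro _ ⟨i, rfl⟩
      obtain ⟨y, hy⟩ := (bN i).2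
      refine ⟨phi y, ?_⟩
      rw [Matrix.mulVecLin_apply, ← phi_mulVec]
      have : N.mulVec y = (bN i : Fin 3 → ℤ) := hy
      rw [this]
    · rw [Matrix.range_mulVecLin, Submodule.span_le]
      rintro _ ⟨j, rfl⟩
      have hcol : (N.map (Int.castRingHom ℚ)).col j = phi (Nᵀ j) := by
        funext i
        simp [phi, Matrix.map_apply]
      rw [hcol]
      have hmem : Nᵀ j ∈ R := ⟨Pi.single j 1, by
        rw [Matrix.mulVecLin_apply, Matrix.mulVec_single_one]; rfl⟩
      have h2 : phi (Nᵀ j) = ∑ i, (bN.repr ⟨Nᵀ j, hmem⟩ i) • u i := by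
        have h0 : (phi.comp R.subtype) (⟨Nᵀ j, hmem⟩ : R) = phi (Nᵀ j) := rfl
        rw [← h0, ← Module.Basis.sum_repr bN ⟨Nᵀ j, hmem⟩, map_sum]
        simp [u]
      rw [h2]
      refine Submodule.sum_mem _ fun i _ => ?_
      have : (bN.repr ⟨Nᵀ j, hmem⟩ i) • u i
          = ((bN.repr ⟨Nᵀ j, hmem⟩ i : ℚ)) • u i := by
        rw [Int.cast_smul_eq_zsmul]
      rw [this]
      exact Submodule.smul_mem _ _ (Submodule.subset_span ⟨i, rfl⟩)
  have hcard := finrank_span_eq_card hindQ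
  rw [hspan] at hcard
  have h' : Module.finrank ℚ ↥(LinearMap.range (N.map (Int.castRingHom ℚ)).mulVecLin) = 1 := h
  rw [h'] at hcard
  simp only [Fintype.card_fin] at hcard
  omega

end SL3AuxNF

open SL3AuxNF Matrix in
theorem sl3_unipotent_geometric_multiplicity_two_normal_form
    (M : Matrix (Fin 3) (Fin 3) ℤ) (hdet : M.det = 1)
    (hchar : M.charpoly = (X - 1) ^ 3)
    (hrank : ((M - 1).map (Int.castRingHom ℚ)).rank = 1) :
    ∃ T : Matrix (Fin 3) (Fin 3) ℤ, T.det = 1 ∧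
      ∃ m : ℤ, T * M * T⁻¹ = !![1, 0, m; 0, 1, 0; 0, 0, 1] := by
  classical
  set N : Matrix (Fin 3) (Fin 3) ℤ := M - 1 with hNdef
  -- Cayley–Hamilton: N ^ 3 = 0
  have hN3 : N ^ 3 = 0 := by
    have h := Matrix.aeval_self_charpoly M
    rw [hchar] at h
    simpa [map_pow, map_sub, aeval_X, _root_.map_one] using h
  -- Smith normal form of the range lattice
  set R := LinearMap.range N.mulVecLin with hR
  obtain ⟨n, snf⟩ := R.smithNormalForm (Pi.basisFun ℤ (Fin 3))
  obtain ⟨bM, bN, femb, a, hsnf⟩ := snf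
  have hn : n = 1 := card_eq_one N bN hrank
  subst hn
  set v : Fin 3 → ℤ := (bN 0 : Fin 3 → ℤ) with hvdef
  set d : ℤ := a 0 with hddef
  set i0 : Fin 3 := femb 0 with hi0
  have hv : v = d • bM i0 := hsnf 0
  have hvne : v ≠ 0 := by
    simp only [hvdef, ne_eq, ZeroMemClass.coe_eq_zero]
    exact bN.ne_zero 0
  have hd : d ≠ 0 := by
    intro h
    apply hvne
    rw [hv, h, zero_smul]
  -- the coordinate functional
  set c : (Fin 3 → ℤ) →ₗ[ℤ] ℤ :=
    (Finsupp.lapply 0) ∘ₗ (bN.repr : R ≃ₗ[ℤ] (Fin 1 →₀ ℤ)).toLinearMap ∘ₗ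
      N.mulVecLin.rangeRestrict with hcdef
  have key : ∀ x : Fin 3 → ℤ, N.mulVec x = c x • v := by
    intro x
    have hsum : (bN.repr (N.mulVecLin.rangeRestrict x) 0) • bN 0
        = N.mulVecLin.rangeRestrict x := by
      have := Module.Basis.sum_repr bN (N.mulVecLin.rangeRestrict x)
      rwa [Fin.sum_univ_one] at this
    have hval := congrArg (Subtype.val : R → (Fin 3 → ℤ)) hsum
    simp only [Submodule.coe_smul] at hval
    have hcoe : ((N.mulVecLin.rangeRestrict x : R) : Fin 3 → ℤ) = N.mulVec x := by
      simp [LinearMap.rangeRestrict, Matrix.mulVecLin_apply]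
    rw [hcoe] at hval
    rw [← hval]
    congr 1
  have hcv : c v = 0 := by
    obtain ⟨y, hy⟩ := (bN 0).2
    have hy' : N.mulVec y = v := hy
    have h3 : N.mulVec (N.mulVec (N.mulVec y)) = 0 := by
      rw [Matrix.mulVec_mulVec, Matrix.mulVec_mulVec]
      have hpow : N * N * N = N ^ 3 := by
        rw [pow_succ, pow_succ, pow_one]
      rw [hpow, hN3, Matrix.zero_mulVec]
    rw [hy'] at h3
    have e1 : N.mulVec v = c v • v := key v
    have e2 : N.mulVec (N.mulVec v) = (c v * c v) • v := by
      rw [e1, Matrix.mulVec_smul, e1, smul_smul]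
    rw [e2] at h3
    rcases smul_eq_zero.mp h3 with h | h
    · exact mul_self_eq_zero.mp h
    · exact absurd h hvne
  have hcb0 : c (bM i0) = 0 := by
    have h1 : d * c (bM i0) = 0 := by
      rw [← smul_eq_mul, ← _root_.map_smul, ← hv]
      exact hcv
    rcases mul_eq_zero.mp h1 with h | h
    · exact absurd h hd
    · exact h
  -- the adapted basis
  set b' : Module.Basis (Fin 3) ℤ (Fin 3 → ℤ) := bM.reindex (Equiv.swap 0 i0) with hb'
  have hb'0 : b' 0 = bM i0 := by
    rw [hb', Module.Basis.reindex_apply, Equiv.symm_swap, Equiv.swap_apply_left]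
  have hv' : v = d • b' 0 := by rw [hb'0]; exact hv
  have hc0 : c (b' 0) = 0 := by rw [hb'0]; exact hcb0
  have hM' : ∀ x : Fin 3 → ℤ, M.mulVec x = x + c x • v := by
    intro x
    have h := key x
    rw [hNdef, Matrix.sub_mulVec, Matrix.one_mulVec] at h
    rw [← h]
    abel
  set p : ℤ := c (b' 1) with hpdef
  set q : ℤ := c (b' 2) with hqdef
  set S : Matrix (Fin 3) (Fin 3) ℤ := Matrix.of fun i j => b' j i with hSdef
  set A : Matrix (Fin 3) (Fin 3) ℤ := !![1, d * p, d * q; 0, 1, 0; 0, 0, 1] with hAdef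
  have hMS : M * S = S * A := by
    ext i j
    have hL : (M * S) i j = b' j i + c (b' j) * (d * b' 0 i) := by
      rw [Matrix.mul_apply]
      have h1 : ∑ k, M i k * S k j = (M.mulVec (b' j)) i := by
        simp [Matrix.mulVec, dotProduct, hSdef]
      rw [h1, hM' (b' j)]
      rw [hv']
      simp [mul_assoc]
    have hR' : (S * A) i j = b' 0 i * A 0 j + b' 1 i * A 1 j + b' 2 i * A 2 j := by
      rw [Matrix.mul_apply, Fin.sum_univ_three]
      simp [hSdef]
    rw [hL, hR']
    fin_cases j <;>
      simp [hAdef, hc0, Matrix.vecHead, Matrix.vecTail] <;> ring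
  -- S is invertible over ℤ
  have hSmat : S = (Pi.basisFun ℤ (Fin 3)).toMatrix ⇑b' := by
    ext i j
    simp [hSdef, Module.Basis.toMatrix_apply, Pi.basisFun_repr]
  have hSr : S * (b'.toMatrix ⇑(Pi.basisFun ℤ (Fin 3))) = 1 := by
    rw [hSmat]
    exact Module.Basis.toMatrix_mul_toMatrix_flip _ _
  have hSdetU : IsUnit S.det := Matrix.isUnit_det_of_right_inverse hSr
  -- kill the (0,1) entry with an SL₂ Bezout move
  obtain ⟨V, g, hVdet, hAV⟩ : ∃ (V : Matrix (Fin 3) (Fin 3) ℤ) (g : ℤ),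
      V.det = 1 ∧ A * V = V * !![1, 0, g; 0, 1, 0; 0, 0, 1] := by
    by_cases hp : d * p = 0
    · refine ⟨1, d * q, Matrix.det_one, ?_⟩
      rw [mul_one, one_mul, hAdef, hp]
    · set P : ℤ := d * p with hPd
      set Q : ℤ := d * q with hQd
      set g0 : ℤ := (Int.gcd P Q : ℤ) with hg0
      have hg0ne : g0 ≠ 0 := by
        simp only [hg0, ne_eq, Int.natCast_eq_zero]
        rw [Int.gcd_eq_zero_iff]
        intro ⟨h1, _⟩
        exact hp h1
      obtain ⟨P', hP'⟩ : g0 ∣ P := Int.gcd_dvd_left P Q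
      obtain ⟨Q', hQ'⟩ : g0 ∣ Q := Int.gcd_dvd_right P Q
      set x : ℤ := Int.gcdA P Q with hx
      set y : ℤ := Int.gcdB P Q with hy
      have hbez : P * x + Q * y = g0 := (Int.gcd_eq_gcd_ab P Q).symm
      have hkey : P' * x + Q' * y = 1 := by
        have h2 : g0 * (P' * x + Q' * y) = g0 * 1 := by
          rw [mul_one]
          linear_combination hbez - x * hP' - y * hQ'
        exact mul_left_cancel₀ hg0ne h2
      refine ⟨!![1, 0, 0; 0, Q', x; 0, -P', y], g0, ?_, ?_⟩
      · rw [Matrix.det_fin_three]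
        simp [Matrix.vecHead, Matrix.vecTail]
        linear_combination hkey
      · ext i j
        fin_cases i <;> fin_cases j <;>
          simp [hAdef, Matrix.mul_apply, Fin.sum_univ_three, Matrix.vecHead, Matrix.vecTail]
        · linear_combination (Q' * hP') - (P' * hQ')
        · linear_combination hbez
  -- assemble the conjugating matrix
  set P : Matrix (Fin 3) (Fin 3) ℤ := S * V with hPdef2
  have hMP : M * P = P * !![1, 0, g; 0, 1, 0; 0, 0, 1] := by
    rw [hPdef2, ← mul_assoc, hMS, mul_assoc, hAV, ← mul_assoc]
  have hPdetU : IsUnit P.det := by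
    rw [hPdef2, Matrix.det_mul, hVdet, mul_one]
    exact hSdetU
  set ε : ℤ := P.det with hεdef
  have hε2 : ε * ε = 1 := by
    rcases Int.isUnit_iff.mp hPdetU with h | h <;> rw [h] <;> norm_num
  set D : Matrix (Fin 3) (Fin 3) ℤ := !![1, 0, 0; 0, 1, 0; 0, 0, ε] with hDdef
  have hDdet : D.det = ε := by
    rw [hDdef, Matrix.det_fin_three]
    simp
  have hAD : !![1, 0, g; 0, 1, 0; 0, 0, 1] * D = D * !![1, 0, ε * g; 0, 1, 0; 0, 0, 1] := by
    ext i j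
    fin_cases i <;> fin_cases j <;>
      simp [hDdef, Matrix.mul_apply, Fin.sum_univ_three, Matrix.vecHead, Matrix.vecTail] <;> ring
  set Pf : Matrix (Fin 3) (Fin 3) ℤ := P * D with hPfdef
  have hMPf : M * Pf = Pf * !![1, 0, ε * g; 0, 1, 0; 0, 0, 1] := by
    rw [hPfdef, ← mul_assoc, hMP, mul_assoc, hAD, ← mul_assoc]
  have hPfdet : Pf.det = 1 := by
    rw [hPfdef, Matrix.det_mul, hDdet, ← hεdef, hε2]
  have hPfU : IsUnit Pf.det := by rw [hPfdet]; exact isUnit_one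
  refine ⟨Pf⁻¹, ?_, ε * g, ?_⟩
  · rw [Matrix.det_nonsing_inv, hPfdet, Ring.inverse_one]
  · rw [Matrix.nonsing_inv_nonsing_inv Pf hPfU, mul_assoc, hMPf, ← mul_assoc,
      Matrix.nonsing_inv_mul Pf hPfU, one_mul]
end
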